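/- Suppose W₁ = V₁^⊥ and W₂ = V₂^⊥ for a nondegenerate reflexive bilinear form ⟨·,·⟩ on E. Then E = F_e ⊕ F_τ ⊕ F̃, and the three subspaces F_e, F_τ, F̃ are pairwise orthogonal with respect to ⟨·,·⟩. -/

import Mathlib

open Submodule LinearMap

/-- For a permutation `σ` of `{1,2}`, the increasing sequence of subspaces `F_σ(n)`:
`F_σ(0) = ⊥`, `F_σ(n+1) = Σ_i (F_σ(n) + Vᵢ) ⊓ (F_σ(n) + W_{σ(i)})`. -/
noncomputable def Fsig {K E : Type*} [Field K] [AddCommGroup E] [Module K E]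
    (V W : Fin 2 → Submodule K E) (σ : Equiv.Perm (Fin 2)) : ℕ → Submodule K E
  | 0 => ⊥
  | n + 1 => ⨆ i : Fin 2, (Fsig V W σ n ⊔ V i) ⊓ (Fsig V W σ n ⊔ W (σ i))

/-- The decreasing sequence of subspaces `F̃(n)`:
`F̃(0) = E`, `F̃(n+1) = ∩_{i,j} ((F̃(n) ∩ Vᵢ) + (F̃(n) ∩ Wⱼ))`. -/
noncomputable def FTilde {K E : Type*} [Field K] [AddCommGroup E] [Module K E]
    (V W : Fin 2 → Submodule K E) : ℕ → Submodule K E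
  | 0 => ⊤
  | n + 1 => ⨅ i : Fin 2, ⨅ j : Fin 2, (FTilde V W n ⊓ V i) ⊔ (FTilde V W n ⊓ W j)

section StmtAux
variable {K E : Type*} [Field K] [AddCommGroup E] [Module K E]

/-- existence of the involution attached to a direct-sum decomposition -/
private lemma stmt13.exists_invol (h2 : (2:K) ≠ 0) (V0 V1 : Submodule K E)
    (hV : IsCompl V0 V1) :
    ∃ u : Module.End K E, u * u = 1 ∧ LinearMap.ker (u - 1) = V0 ∧
      LinearMap.ker (u + 1) = V1 := by
  set P : Module.End K E := V0.subtype ∘ₗ V0.projectionOnto V1 hV with hPdef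
  have hP0 : ∀ x ∈ V0, P x = x := by
    intro x hx
    have : V0.projectionOnto V1 hV x = ⟨x, hx⟩ :=
      Submodule.linearProjOfIsCompl_apply_left hV ⟨x, hx⟩
    simp [hPdef, this]
  have hP1 : ∀ x ∈ V1, P x = 0 := by
    intro x hx
    have : V0.projectionOnto V1 hV x = 0 :=
      Submodule.linearProjOfIsCompl_apply_right' hV hx
    simp [hPdef, this]
  have hPmem : ∀ x, P x ∈ V0 := fun x => (V0.projectionOnto V1 hV x).2
  have hsub : ∀ x, x - P x ∈ V1 := by
    intro x
    rw [← Submodule.linearProjOfIsCompl_apply_eq_zero_iff hV (x := x - P x)]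
    have h1 : V0.projectionOnto V1 hV (P x) = V0.projectionOnto V1 hV x := by
      have := Submodule.linearProjOfIsCompl_apply_left hV ⟨P x, hPmem x⟩
      rw [this]
      exact Subtype.ext rfl
    rw [map_sub, h1, sub_self]
  have hPP : ∀ x, P (P x) = P x := fun x => hP0 _ (hPmem x)
  refine ⟨(2:K) • P - 1, ?_, ?_, ?_⟩
  · ext x
    simp only [Module.End.mul_apply, LinearMap.sub_apply, LinearMap.smul_apply,
      Module.End.one_apply, map_sub, map_smul, hPP]
    module
  · ext x
    simp only [LinearMap.mem_ker, LinearMap.sub_apply, LinearMap.smul_apply,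
      Module.End.one_apply]
    constructor
    · intro h
      have hPx : P x = x := by
        have h' : (2:K) • (P x - x) = 0 := by
          have heq : (2:K) • (P x - x) = (2:K) • P x - x - x := by module
          rw [heq, h]
        rcases smul_eq_zero.mp h' with h'' | h''
        · exact absurd h'' h2
        · exact sub_eq_zero.mp h''
      rw [← hPx]; exact hPmem x
    · intro hx
      rw [hP0 x hx]; module
  · ext x
    simp only [LinearMap.mem_ker, LinearMap.add_apply, LinearMap.sub_apply,
      LinearMap.smul_apply, Module.End.one_apply]
    constructor
    · intro h
      have hPx : P x = 0 := by
        have h' : (2:K) • P x = 0 := by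
          have heq : (2:K) • P x = (2:K) • P x - x + x := by module
          rw [heq, h]
        rcases smul_eq_zero.mp h' with h'' | h''
        · exact absurd h'' h2
        · exact h''
      have := hsub x
      rw [hPx, sub_zero] at this
      exact this
    · intro hx
      rw [hP1 x hx]; module

private lemma stmt13.lemA (h2 : (2:K) ≠ 0) {u : Module.End K E} (huu : u * u = 1)
    {M : Submodule K E} (hMu : ∀ x ∈ M, u x ∈ M) :
    M ⊔ LinearMap.ker (u - 1) = Submodule.comap (u - 1) M := by
  have huu' : ∀ w, u (u w) = w := fun w => by
    rw [← Module.End.mul_apply, huu, Module.End.one_apply]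
  have h21 : (2:K)⁻¹ * 2 = 1 := inv_mul_cancel₀ h2
  apply le_antisymm
  · refine sup_le ?_ ?_
    · intro x hx
      simp only [Submodule.mem_comap, LinearMap.sub_apply, Module.End.one_apply]
      exact sub_mem (hMu x hx) hx
    · intro x hx
      rw [LinearMap.mem_ker] at hx
      simp only [Submodule.mem_comap, hx]
      exact zero_mem M
  · intro x hx
    rw [Submodule.mem_comap] at hx
    have hx' : u x - x ∈ M := by
      simpa only [LinearMap.sub_apply, Module.End.one_apply] using hx
    refine Submodule.mem_sup.2 ⟨(-(2:K)⁻¹) • (u x - x), smul_mem _ _ hx',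
      (2:K)⁻¹ • (x + u x), ?_, ?_⟩
    · rw [LinearMap.mem_ker]
      simp only [LinearMap.sub_apply, Module.End.one_apply, map_smul, map_add, huu']
      module
    · match_scalars
      all_goals first
        | ring1
        | (linear_combination h21)
        | (linear_combination -h21)

private lemma stmt13.lemB {u s : Module.End K E} {M : Submodule K E}
    (hMu : ∀ x ∈ M, u x ∈ M)
    {x : E} (hxu : u x - x ∈ M) (hxs : s x - x ∈ M) : (u * s) x - x ∈ M := by
  have heq : (u * s) x - x = u (s x - x) + (u x - x) := by
    simp only [Module.End.mul_apply, map_sub]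
    abel
  rw [heq]
  exact add_mem (hMu _ hxs) hxu

private lemma stmt13.lemC (h2 : (2:K) ≠ 0) {u s : Module.End K E}
    (huu : u * u = 1) (hss : s * s = 1)
    {M : Submodule K E} (hMu : ∀ x ∈ M, u x ∈ M)
    {x : E} (hx : (u * s) x - x ∈ M) :
    ∃ y z, y + z = x ∧ (u y - y ∈ M) ∧ (s y - y = 0) ∧ (u z + z ∈ M) ∧ (s z + z = 0) := by
  have huu' : ∀ w, u (u w) = w := fun w => by
    rw [← Module.End.mul_apply, huu, Module.End.one_apply]
  have hss' : ∀ w, s (s w) = w := fun w => by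
    rw [← Module.End.mul_apply, hss, Module.End.one_apply]
  have h21 : (2:K)⁻¹ * 2 = 1 := inv_mul_cancel₀ h2
  have hum : u ((u * s) x - x) = s x - u x := by
    simp only [Module.End.mul_apply, map_sub, huu' (s x)]
  refine ⟨(2:K)⁻¹ • (x + s x), (2:K)⁻¹ • (x - s x), ?_, ?_, ?_, ?_, ?_⟩
  · match_scalars
    all_goals first
      | ring1
      | (linear_combination h21)
      | (linear_combination -h21)
  · have heq : u ((2:K)⁻¹ • (x + s x)) - (2:K)⁻¹ • (x + s x)
        = (2:K)⁻¹ • (((u * s) x - x) - u ((u * s) x - x)) := by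
      rw [hum]
      simp only [map_smul, map_add, Module.End.mul_apply]
      module
    rw [heq]
    exact smul_mem _ _ (sub_mem hx (hMu _ hx))
  · simp only [map_smul, map_add, hss' x]
    module
  · have heq : u ((2:K)⁻¹ • (x - s x)) + (2:K)⁻¹ • (x - s x)
        = (-(2:K)⁻¹) • (((u * s) x - x) + u ((u * s) x - x)) := by
      rw [hum]
      simp only [map_smul, map_sub, Module.End.mul_apply]
      module
    rw [heq]
    exact smul_mem _ _ (add_mem hx (hMu _ hx))
  · simp only [map_smul, map_sub, hss' x]
    module

private lemma stmt13.comm_pow {f g f' : Module.End K E} (h : f * g = g * f') (n : ℕ) :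
    f ^ n * g = g * f' ^ n := by
  induction n with
  | zero => simp
  | succ n ih =>
    rw [pow_succ, pow_succ, mul_assoc, h, ← mul_assoc, ih, mul_assoc]

private lemma stmt13.stab_aux {f g f' h : Module.End K E} (h1 : f * g = g * f') {n : ℕ}
    (h2 : f' ^ n = h * f ^ n) {x : E} (hx : (f ^ n) x = 0) : (f ^ n) (g x) = 0 := by
  have : (f ^ n) (g x) = g (h ((f ^ n) x)) := by
    rw [← Module.End.mul_apply, stmt13.comm_pow h1 n, h2, Module.End.mul_apply,
      Module.End.mul_apply]
  rw [this, hx, map_zero, map_zero]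

/-- solvability of `g z - 2 z = k` on the kernel of `g ^ n` -/
private lemma stmt13.neumann (h2 : (2:K) ≠ 0) (g : Module.End K E) (n : ℕ) (k : E)
    (hk : (g ^ n) k = 0) : ∃ z, (g ^ n) z = 0 ∧ g z - (2:K) • z = k := by
  set t : ℕ → E := fun j => ((2:K)⁻¹) ^ j • (g ^ j) k with ht
  set z : E := -∑ j ∈ Finset.range n, ((2:K)⁻¹) ^ (j+1) • (g ^ j) k with hz
  have hgj : ∀ j, g ((g ^ j) k) = (g ^ (j+1)) k := by
    intro j; rw [pow_succ' g, Module.End.mul_apply]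
  refine ⟨z, ?_, ?_⟩
  · rw [hz, map_neg, map_sum, neg_eq_zero]
    refine Finset.sum_eq_zero fun j _ => ?_
    rw [map_smul, ← Module.End.mul_apply, ← pow_add]
    have : (g ^ (n + j)) k = 0 := by
      rw [add_comm, pow_add, Module.End.mul_apply, hk, map_zero]
    rw [this, smul_zero]
  · have key : ∀ j ∈ Finset.range n,
        g (((2:K)⁻¹) ^ (j+1) • (g ^ j) k) - (2:K) • (((2:K)⁻¹) ^ (j+1) • (g ^ j) k)
        = t (j+1) - t j := by
      intro j _
      rw [ht]
      have h2j : (2:K) * ((2:K)⁻¹) ^ (j+1) = ((2:K)⁻¹) ^ j := by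
        rw [pow_succ, mul_comm ((2:K)⁻¹ ^ j) _, ← mul_assoc, mul_inv_cancel₀ h2, one_mul]
      rw [map_smul, smul_smul, h2j, hgj j]
    have hsum : g z - (2:K) • z
        = -∑ j ∈ Finset.range n, (g (((2:K)⁻¹) ^ (j+1) • (g ^ j) k)
            - (2:K) • (((2:K)⁻¹) ^ (j+1) • (g ^ j) k)) := by
      rw [hz, map_neg, map_sum, smul_neg, Finset.smul_sum, Finset.sum_sub_distrib]
      abel
    rw [hsum, Finset.sum_congr rfl key, Finset.sum_range_sub (f := t)]
    have ht0 : t 0 = k := by simp [ht]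
    have htn : t n = 0 := by rw [ht]; simp only [hk, smul_zero]
    rw [htn, ht0, zero_sub, neg_neg]

private lemma stmt13.neumann' (h2 : (2:K) ≠ 0) (g : Module.End K E) (n : ℕ) (k : E)
    (hk : (g ^ n) k = 0) : ∃ z, (g ^ n) z = 0 ∧ g z + (2:K) • z = k := by
  have hk' : ((-g) ^ n) k = 0 := by
    rw [neg_pow, Module.End.mul_apply, hk, map_zero]
  obtain ⟨z, hz1, hz2⟩ := stmt13.neumann h2 (-g) n k hk'
  rw [neg_pow, Module.End.mul_apply] at hz1
  refine ⟨-z, ?_, ?_⟩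
  · rw [map_neg, neg_eq_zero]
    have h11 : ((-1 : Module.End K E) ^ n) * ((-1 : Module.End K E) ^ n) = 1 := by
      rw [← pow_add, ← two_mul, pow_mul]
      norm_num
    have : (g ^ n) z = ((-1 : Module.End K E) ^ n) (((-1 : Module.End K E) ^ n) ((g ^ n) z)) := by
      rw [← Module.End.mul_apply, ← Module.End.mul_apply, h11, one_mul]
    rw [this, hz1, map_zero]
  · rw [map_neg, smul_neg, ← hz2, LinearMap.neg_apply]
    abel

/-- pairwise disjointness of the two generalized kernels, by double induction -/
private lemma stmt13.lemDisj (h2 : (2:K) ≠ 0) {a b : Module.End K E} (hab : a * b = b * a)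
    (hba : ∀ v, b v - a v = (2:K) • v) :
    ∀ n i j, i + j ≤ n → ∀ x, (a ^ i) x = 0 → (b ^ j) x = 0 → x = 0 := by
  have hC : Commute a b := hab
  intro n
  induction n with
  | zero =>
    intro i j hij x hxa hxb
    have hi : i = 0 := by omega
    subst hi
    simpa using hxa
  | succ n ih =>
    intro i j hij x hxa hxb
    match i, j with
    | 0, j => simpa using hxa
    | i, 0 => simpa using hxb
    | i+1, j+1 =>
      have hax : a x = 0 := by
        refine ih i (j+1) (by omega) (a x) ?_ ?_
        · rw [← Module.End.mul_apply, ← pow_succ]; exact hxa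
        · rw [← Module.End.mul_apply, ← (hC.pow_right (j+1)).eq, Module.End.mul_apply,
            hxb, map_zero]
      have hbx : b x = 0 := by
        refine ih (i+1) j (by omega) (b x) ?_ ?_
        · rw [← Module.End.mul_apply, (hC.pow_left (i+1)).eq, Module.End.mul_apply,
            hxa, map_zero]
        · rw [← Module.End.mul_apply, ← pow_succ]; exact hxb
      have h2x : (2:K) • x = 0 := by rw [← hba x, hax, hbx, sub_zero]
      rcases smul_eq_zero.mp h2x with h | h
      · exact absurd h h2
      · exact h

/-- orthogonality of the two generalized kernels, by double induction -/
private lemma stmt13.lemOrth (h2 : (2:K) ≠ 0) (B : LinearMap.BilinForm K E)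
    {a b : Module.End K E}
    (hba : ∀ v, b v - a v = (2:K) • v)
    (hBa : ∀ x y, B (a x) y = B x (a y)) :
    ∀ n i j, i + j ≤ n → ∀ x y, (a ^ i) x = 0 → (b ^ j) y = 0 → B x y = 0 := by
  intro n
  induction n with
  | zero =>
    intro i j hij x y hxa hyb
    have hi : i = 0 := by omega
    subst hi
    have : x = 0 := by simpa using hxa
    rw [this, map_zero, LinearMap.zero_apply]
  | succ n ih =>
    intro i j hij x y hxa hyb
    match i, j with
    | 0, j =>
      have : x = 0 := by simpa using hxa
      rw [this, map_zero, LinearMap.zero_apply]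
    | i, 0 =>
      have : y = 0 := by simpa using hyb
      rw [this, map_zero]
    | i+1, j+1 =>
      have h1 : B x (b y) = 0 := by
        refine ih (i+1) j (by omega) x (b y) hxa ?_
        rw [← Module.End.mul_apply, ← pow_succ]; exact hyb
      have h2' : B (a x) y = 0 := by
        refine ih i (j+1) (by omega) (a x) y ?_ hyb
        rw [← Module.End.mul_apply, ← pow_succ]; exact hxa
      have hkey : (2:K) * B x y = 0 := by
        calc (2:K) * B x y = B x ((2:K) • y) := by rw [map_smul, smul_eq_mul]
        _ = B x (b y - a y) := by rw [hba y]
        _ = B x (b y) - B x (a y) := by rw [map_sub]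
        _ = 0 := by rw [h1, ← hBa, h2', sub_zero]
      rcases mul_eq_zero.mp hkey with h | h
      · exact absurd h h2
      · exact h

private lemma stmt13.orth_sup (B : LinearMap.BilinForm K E) (A C : Submodule K E) :
    B.orthogonal (A ⊔ C) = B.orthogonal A ⊓ B.orthogonal C := by
  ext m
  simp only [LinearMap.BilinForm.mem_orthogonal_iff, Submodule.mem_inf]
  constructor
  · intro h
    exact ⟨fun n hn => h n (Submodule.mem_sup_left hn),
      fun n hn => h n (Submodule.mem_sup_right hn)⟩
  · rintro ⟨h1, h2⟩ n hn
    rcases Submodule.mem_sup.1 hn with ⟨y, hy, z, hz, rfl⟩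
    have e1 : B y m = 0 := h1 y hy
    have e2 : B z m = 0 := h2 z hz
    simp only [LinearMap.BilinForm.IsOrtho, map_add, LinearMap.add_apply, e1, e2, add_zero]

private lemma stmt13.orth_inf [FiniteDimensional K E] {B : LinearMap.BilinForm K E}
    (hBnd : B.Nondegenerate) (hBrefl : B.IsRefl) (A C : Submodule K E) :
    B.orthogonal (A ⊓ C) = B.orthogonal A ⊔ B.orthogonal C := by
  conv_lhs => rw [← LinearMap.BilinForm.orthogonal_orthogonal hBnd hBrefl A,
    ← LinearMap.BilinForm.orthogonal_orthogonal hBnd hBrefl C]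
  rw [← stmt13.orth_sup, LinearMap.BilinForm.orthogonal_orthogonal hBnd hBrefl]

private lemma stmt13.iSup_fin2 (f : Fin 2 → Submodule K E) : (⨆ i, f i) = f 0 ⊔ f 1 := by
  apply le_antisymm
  · refine iSup_le fun i => ?_
    fin_cases i
    · exact le_sup_left
    · exact le_sup_right
  · exact sup_le (le_iSup f 0) (le_iSup f 1)

private lemma stmt13.iInf_fin2 (f : Fin 2 → Submodule K E) : (⨅ i, f i) = f 0 ⊓ f 1 := by
  apply le_antisymm
  · exact le_inf (iInf_le f 0) (iInf_le f 1)
  · refine le_iInf fun i => ?_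
    fin_cases i
    · exact inf_le_left
    · exact inf_le_right

private lemma stmt13.orth_iSup2 (B : LinearMap.BilinForm K E)
    (f : Fin 2 → Fin 2 → Submodule K E) :
    B.orthogonal (⨆ i : Fin 2, ⨆ j : Fin 2, f i j)
      = ⨅ i : Fin 2, ⨅ j : Fin 2, B.orthogonal (f i j) := by
  rw [stmt13.iSup_fin2 (fun i => ⨆ j, f i j), stmt13.orth_sup,
    stmt13.iSup_fin2 (f 0), stmt13.iSup_fin2 (f 1), stmt13.orth_sup, stmt13.orth_sup,
    stmt13.iInf_fin2 (fun i => ⨅ j, B.orthogonal (f i j)),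
    stmt13.iInf_fin2 (fun j => B.orthogonal (f 0 j)),
    stmt13.iInf_fin2 (fun j => B.orthogonal (f 1 j))]

private lemma stmt13.iSup2_fin2 (f : Fin 2 → Fin 2 → Submodule K E) :
    (⨆ i : Fin 2, ⨆ j : Fin 2, f i j) = (f 0 0 ⊔ f 0 1) ⊔ (f 1 0 ⊔ f 1 1) := by
  rw [stmt13.iSup_fin2 (fun i => ⨆ j, f i j), stmt13.iSup_fin2 (f 0), stmt13.iSup_fin2 (f 1)]

private lemma stmt13.ker_neg (f : Module.End K E) : LinearMap.ker (-f) = LinearMap.ker f := by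
  ext x
  simp [LinearMap.mem_ker, LinearMap.neg_apply, neg_eq_zero]

private lemma stmt13.comap_neg (f : Module.End K E) (M : Submodule K E) :
    Submodule.comap (-f) M = Submodule.comap f M := by
  ext x
  simp only [Submodule.mem_comap, LinearMap.neg_apply, neg_mem_iff]

private lemma stmt13.adj_pow (B : LinearMap.BilinForm K E) {f : Module.End K E}
    (h : ∀ x y, B (f x) y = B x (f y)) (n : ℕ) :
    ∀ x y, B ((f ^ n) x) y = B x ((f ^ n) y) := by
  induction n with
  | zero => intro x y; simp
  | succ n ih =>
    intro x y
    rw [pow_succ, Module.End.mul_apply, ih, h, ← Module.End.mul_apply, ← pow_succ', pow_succ]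

end StmtAux

/-- If `W₁ = V₁^⊥` and `W₂ = V₂^⊥` for a nondegenerate reflexive bilinear form, then
`E = F_e ⊕ F_τ ⊕ F̃` and the three summands are pairwise orthogonal. -/
theorem stmt13 {K E : Type*} [Field K] [AddCommGroup E] [Module K E]
    [FiniteDimensional K E] (hchar : (2 : K) ≠ 0)
    (B : LinearMap.BilinForm K E) (hBnd : B.Nondegenerate) (hBrefl : B.IsRefl)
    (V : Fin 2 → Submodule K E) (hV : IsCompl (V 0) (V 1))
    (W : Fin 2 → Submodule K E) (hWdef : ∀ i, W i = B.orthogonal (V i))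
    (hW : IsCompl (W 0) (W 1))
    (Fe Ftau Ft : Submodule K E)
    (hFe : Fe = ⨆ n : ℕ, Fsig V W 1 n)
    (hFtau : Ftau = ⨆ n : ℕ, Fsig V W (Equiv.swap 0 1) n)
    (hFt : Ft = ⨅ n : ℕ, FTilde V W n) :
    (Disjoint Fe Ftau ∧ Disjoint (Fe ⊔ Ftau) Ft ∧ Fe ⊔ Ftau ⊔ Ft = ⊤) ∧
    (∀ x ∈ Fe, ∀ y ∈ Ftau, B x y = 0) ∧
    (∀ x ∈ Fe, ∀ y ∈ Ft, B x y = 0) ∧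
    (∀ x ∈ Ftau, ∀ y ∈ Ft, B x y = 0) := by
  classical
  obtain ⟨u, huu, hku0, hku1⟩ := stmt13.exists_invol hchar (V 0) (V 1) hV
  obtain ⟨s, hss, hks0, hks1⟩ := stmt13.exists_invol hchar (W 0) (W 1) hW
  have huu' : ∀ w, u (u w) = w := fun w => by
    rw [← Module.End.mul_apply, huu, Module.End.one_apply]
  have hss' : ∀ w, s (s w) = w := fun w => by
    rw [← Module.End.mul_apply, hss, Module.End.one_apply]
  -- action of u, s on the pieces
  have hu0 : ∀ x ∈ V 0, u x = x := by
    intro x hx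
    rw [← hku0, LinearMap.mem_ker] at hx
    have : u x - x = 0 := by
      simpa only [LinearMap.sub_apply, Module.End.one_apply] using hx
    rw [sub_eq_zero] at this; exact this
  have hu1 : ∀ x ∈ V 1, u x = -x := by
    intro x hx
    rw [← hku1, LinearMap.mem_ker] at hx
    have : u x + x = 0 := by
      simpa only [LinearMap.add_apply, Module.End.one_apply] using hx
    exact eq_neg_of_add_eq_zero_left this
  have hs0 : ∀ x ∈ W 0, s x = x := by
    intro x hx
    rw [← hks0, LinearMap.mem_ker] at hx
    have : s x - x = 0 := by
      simpa only [LinearMap.sub_apply, Module.End.one_apply] using hx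
    rw [sub_eq_zero] at this; exact this
  have hs1 : ∀ x ∈ W 1, s x = -x := by
    intro x hx
    rw [← hks1, LinearMap.mem_ker] at hx
    have : s x + x = 0 := by
      simpa only [LinearMap.add_apply, Module.End.one_apply] using hx
    exact eq_neg_of_add_eq_zero_left this
  -- decompositions
  have hVsup : ∀ x : E, ∃ v0 ∈ V 0, ∃ v1 ∈ V 1, v0 + v1 = x := by
    intro x
    have hx : x ∈ V 0 ⊔ V 1 := by
      rw [codisjoint_iff.mp hV.codisjoint]; exact Submodule.mem_top
    exact Submodule.mem_sup.1 hx
  have hWsup : ∀ x : E, ∃ w0 ∈ W 0, ∃ w1 ∈ W 1, w0 + w1 = x := by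
    intro x
    have hx : x ∈ W 0 ⊔ W 1 := by
      rw [codisjoint_iff.mp hW.codisjoint]; exact Submodule.mem_top
    exact Submodule.mem_sup.1 hx
  -- orthogonality between V i and W i
  have horth : ∀ i, ∀ x ∈ V i, ∀ y ∈ W i, B x y = 0 := by
    intro i x hx y hy
    rw [hWdef i] at hy
    exact hy x hx
  -- adjointness relations
  have hBus : ∀ x y, B (u x) y = -(B x (s y)) := by
    intro x y
    obtain ⟨v0, hv0, v1, hv1, hx⟩ := hVsup x
    obtain ⟨w0, hw0, w1, hw1, hy⟩ := hWsup y
    subst hx; subst hy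
    have e00 : B v0 w0 = 0 := horth 0 v0 hv0 w0 hw0
    have e11 : B v1 w1 = 0 := horth 1 v1 hv1 w1 hw1
    have hux : u (v0 + v1) = v0 - v1 := by
      rw [map_add, hu0 v0 hv0, hu1 v1 hv1, sub_eq_add_neg]
    have hsy : s (w0 + w1) = w0 - w1 := by
      rw [map_add, hs0 w0 hw0, hs1 w1 hw1, sub_eq_add_neg]
    rw [hux, hsy]
    simp only [map_sub, map_add, LinearMap.sub_apply, LinearMap.add_apply, e00, e11]
    ring
  have hBsu : ∀ x y, B (s x) y = -(B x (u y)) := by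
    intro x y
    obtain ⟨w0, hw0, w1, hw1, hx⟩ := hWsup x
    obtain ⟨v0, hv0, v1, hv1, hy⟩ := hVsup y
    subst hx; subst hy
    have e00 : B w0 v0 = 0 := hBrefl v0 w0 (horth 0 v0 hv0 w0 hw0)
    have e11 : B w1 v1 = 0 := hBrefl v1 w1 (horth 1 v1 hv1 w1 hw1)
    have hsx : s (w0 + w1) = w0 - w1 := by
      rw [map_add, hs0 w0 hw0, hs1 w1 hw1, sub_eq_add_neg]
    have huy : u (v0 + v1) = v0 - v1 := by
      rw [map_add, hu0 v0 hv0, hu1 v1 hv1, sub_eq_add_neg]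
    rw [hsx, huy]
    simp only [map_sub, map_add, LinearMap.sub_apply, LinearMap.add_apply, e00, e11]
    ring
  -- the operators
  set c : Module.End K E := u * s with hc
  set cinv : Module.End K E := s * u with hcinv
  set a : Module.End K E := c - 1 with ha
  set b : Module.End K E := c + 1 with hb
  have hBc : ∀ x y, B (c x) y = B x (c y) := by
    intro x y
    rw [hc, Module.End.mul_apply, hBus, hBsu, Module.End.mul_apply, neg_neg]
  have hBa : ∀ x y, B (a x) y = B x (a y) := by
    intro x y
    have h1 : a x = c x - x := by simp [ha, LinearMap.sub_apply]
    have h2 : a y = c y - y := by simp [ha, LinearMap.sub_apply]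
    rw [h1, h2, map_sub, LinearMap.sub_apply, map_sub, hBc]
  have hBb : ∀ x y, B (b x) y = B x (b y) := by
    intro x y
    have h1 : b x = c x + x := by simp [hb, LinearMap.add_apply]
    have h2 : b y = c y + y := by simp [hb, LinearMap.add_apply]
    rw [h1, h2, map_add, LinearMap.add_apply, map_add, hBc]
  have hab : a * b = b * a := by rw [ha, hb]; noncomm_ring
  have hCab : Commute a b := hab
  have hba : ∀ v, b v - a v = (2:K) • v := by
    intro v
    have : b v - a v = (c v + v) - (c v - v) := by
      rw [ha, hb]
      simp [LinearMap.add_apply, LinearMap.sub_apply]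
    rw [this]
    module
  have hcc' : c * cinv = 1 := by
    rw [hc, hcinv, mul_assoc, ← mul_assoc s s u, hss, one_mul, huu]
  have hc'c : cinv * c = 1 := by
    rw [hc, hcinv, mul_assoc, ← mul_assoc u u s, huu, one_mul, hss]
  -- conjugation relations
  have hau : a * u = u * (cinv - 1) := by
    rw [ha, hcinv, hc, sub_mul, mul_sub, one_mul, mul_one, mul_assoc]
  have has : a * s = s * (cinv - 1) := by
    rw [ha, hcinv, hc, sub_mul, mul_sub, one_mul, mul_one, mul_assoc u s s, hss,
      mul_one, ← mul_assoc s s u, hss, one_mul]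
  have hbu : b * u = u * (cinv + 1) := by
    rw [hb, hcinv, hc, add_mul, mul_add, one_mul, mul_one, mul_assoc]
  have hbs : b * s = s * (cinv + 1) := by
    rw [hb, hcinv, hc, add_mul, mul_add, one_mul, mul_one, mul_assoc u s s, hss,
      mul_one, ← mul_assoc s s u, hss, one_mul]
  have hc'a : cinv * a = a * cinv := by
    rw [ha, mul_sub, sub_mul, mul_one, one_mul, hcc', hc'c]
  have hc'b : cinv * b = b * cinv := by
    rw [hb, mul_add, add_mul, mul_one, one_mul, hcc', hc'c]
  have ha'eq : cinv - 1 = -(cinv * a) := by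
    have : cinv * a = 1 - cinv := by rw [ha, mul_sub, mul_one, hc'c]
    rw [this]; noncomm_ring
  have hb'eq : cinv + 1 = cinv * b := by
    rw [hb, mul_add, mul_one, hc'c, add_comm]
  have ha'pow : ∀ n : ℕ, (cinv - 1) ^ n = ((-1 : Module.End K E) ^ n * cinv ^ n) * a ^ n := by
    intro n
    rw [ha'eq, neg_pow, (Commute.mul_pow (by exact hc'a) n : (cinv * a) ^ n = cinv ^ n * a ^ n),
      mul_assoc]
  have hb'pow : ∀ n : ℕ, (cinv + 1) ^ n = cinv ^ n * b ^ n := by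
    intro n
    rw [hb'eq, (Commute.mul_pow (by exact hc'b) n : (cinv * b) ^ n = cinv ^ n * b ^ n)]
  -- stability of kernels
  have hstab_a_u : ∀ (n : ℕ) x, (a ^ n) x = 0 → (a ^ n) (u x) = 0 :=
    fun n x hx => stmt13.stab_aux hau (ha'pow n) hx
  have hstab_a_s : ∀ (n : ℕ) x, (a ^ n) x = 0 → (a ^ n) (s x) = 0 :=
    fun n x hx => stmt13.stab_aux has (ha'pow n) hx
  have hstab_b_u : ∀ (n : ℕ) x, (b ^ n) x = 0 → (b ^ n) (u x) = 0 :=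
    fun n x hx => stmt13.stab_aux hbu (hb'pow n) hx
  have hstab_b_s : ∀ (n : ℕ) x, (b ^ n) x = 0 → (b ^ n) (s x) = 0 :=
    fun n x hx => stmt13.stab_aux hbs (hb'pow n) hx
  -- pointwise values of a and b
  have haval : ∀ x, a x = (u * s) x - x := by
    intro x
    rw [ha, hc]
    simp [LinearMap.sub_apply]
  have hbval : ∀ x, b x = (u * s) x + x := by
    intro x
    rw [hb, hc]
    simp [LinearMap.add_apply]
  -- kernel stability as submodule statements
  have hKa_u : ∀ n, ∀ x ∈ LinearMap.ker (a ^ n), u x ∈ LinearMap.ker (a ^ n) :=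
    fun n x hx => LinearMap.mem_ker.2 (hstab_a_u n x (LinearMap.mem_ker.1 hx))
  have hKa_s : ∀ n, ∀ x ∈ LinearMap.ker (a ^ n), s x ∈ LinearMap.ker (a ^ n) :=
    fun n x hx => LinearMap.mem_ker.2 (hstab_a_s n x (LinearMap.mem_ker.1 hx))
  have hKb_u : ∀ n, ∀ x ∈ LinearMap.ker (b ^ n), u x ∈ LinearMap.ker (b ^ n) :=
    fun n x hx => LinearMap.mem_ker.2 (hstab_b_u n x (LinearMap.mem_ker.1 hx))
  have hKb_s : ∀ n, ∀ x ∈ LinearMap.ker (b ^ n), s x ∈ LinearMap.ker (b ^ n) :=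
    fun n x hx => LinearMap.mem_ker.2 (hstab_b_s n x (LinearMap.mem_ker.1 hx))
  have hGu : ∀ n, ∀ x ∈ LinearMap.ker (a ^ n) ⊔ LinearMap.ker (b ^ n),
      u x ∈ LinearMap.ker (a ^ n) ⊔ LinearMap.ker (b ^ n) := by
    intro n x hx
    rcases Submodule.mem_sup.1 hx with ⟨y, hy, z, hz, rfl⟩
    rw [map_add]
    exact Submodule.add_mem_sup (hKa_u n y hy) (hKb_u n z hz)
  have hGs : ∀ n, ∀ x ∈ LinearMap.ker (a ^ n) ⊔ LinearMap.ker (b ^ n),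
      s x ∈ LinearMap.ker (a ^ n) ⊔ LinearMap.ker (b ^ n) := by
    intro n x hx
    rcases Submodule.mem_sup.1 hx with ⟨y, hy, z, hz, rfl⟩
    rw [map_add]
    exact Submodule.add_mem_sup (hKa_s n y hy) (hKb_s n z hz)
  -- sup with V i / W i as comaps
  have hneg_u : (-u) * (-u) = 1 := by rw [neg_mul_neg]; exact huu
  have hneg_s : (-s) * (-s) = 1 := by rw [neg_mul_neg]; exact hss
  have memV0 : ∀ (M : Submodule K E), (∀ x ∈ M, u x ∈ M) →
      M ⊔ V 0 = Submodule.comap (u - 1) M := by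
    intro M hM; rw [← hku0]; exact stmt13.lemA hchar huu hM
  have memV1 : ∀ (M : Submodule K E), (∀ x ∈ M, u x ∈ M) →
      M ⊔ V 1 = Submodule.comap (u + 1) M := by
    intro M hM
    have hM' : ∀ x ∈ M, (-u) x ∈ M := fun x hx => by
      rw [LinearMap.neg_apply]; exact neg_mem (hM x hx)
    have h := stmt13.lemA hchar hneg_u hM'
    rw [show (-u - 1 : Module.End K E) = -(u + 1) from by noncomm_ring] at h
    rw [stmt13.ker_neg, stmt13.comap_neg] at h
    rw [← hku1]; exact h
  have memW0 : ∀ (M : Submodule K E), (∀ x ∈ M, s x ∈ M) →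
      M ⊔ W 0 = Submodule.comap (s - 1) M := by
    intro M hM; rw [← hks0]; exact stmt13.lemA hchar hss hM
  have memW1 : ∀ (M : Submodule K E), (∀ x ∈ M, s x ∈ M) →
      M ⊔ W 1 = Submodule.comap (s + 1) M := by
    intro M hM
    have hM' : ∀ x ∈ M, (-s) x ∈ M := fun x hx => by
      rw [LinearMap.neg_apply]; exact neg_mem (hM x hx)
    have h := stmt13.lemA hchar hneg_s hM'
    rw [show (-s - 1 : Module.End K E) = -(s + 1) from by noncomm_ring] at h
    rw [stmt13.ker_neg, stmt13.comap_neg] at h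
    rw [← hks1]; exact h
  have happ_sub : ∀ (f : Module.End K E) (x : E), (f - 1) x = f x - x := by
    intro f x; simp [LinearMap.sub_apply]
  have happ_add : ∀ (f : Module.End K E) (x : E), (f + 1) x = f x + x := by
    intro f x; simp [LinearMap.add_apply]
  -- the four sign combinations
  have combPP : ∀ (M : Submodule K E), (∀ x ∈ M, u x ∈ M) → ∀ x,
      u x - x ∈ M → s x - x ∈ M → a x ∈ M := by
    intro M hMu x h1 h2
    rw [haval]
    exact stmt13.lemB hMu h1 h2
  have combMM : ∀ (M : Submodule K E), (∀ x ∈ M, u x ∈ M) → ∀ x,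
      u x + x ∈ M → s x + x ∈ M → a x ∈ M := by
    intro M hMu x h1 h2
    have hMu' : ∀ y ∈ M, (-u) y ∈ M := fun y hy => by
      rw [LinearMap.neg_apply]; exact neg_mem (hMu y hy)
    have h1' : (-u) x - x ∈ M := by
      have heq : (-u) x - x = -(u x + x) := by rw [LinearMap.neg_apply]; abel
      rw [heq]; exact neg_mem h1
    have h2' : (-s) x - x ∈ M := by
      have heq : (-s) x - x = -(s x + x) := by rw [LinearMap.neg_apply]; abel
      rw [heq]; exact neg_mem h2
    have h := stmt13.lemB hMu' h1' h2'
    rw [neg_mul_neg] at h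
    rw [haval]
    exact h
  have combPM : ∀ (M : Submodule K E), (∀ x ∈ M, u x ∈ M) → ∀ x,
      u x - x ∈ M → s x + x ∈ M → b x ∈ M := by
    intro M hMu x h1 h2
    have h2' : (-s) x - x ∈ M := by
      have heq : (-s) x - x = -(s x + x) := by rw [LinearMap.neg_apply]; abel
      rw [heq]; exact neg_mem h2
    have h := stmt13.lemB hMu h1 h2'
    rw [mul_neg] at h
    have heq : (-(u * s)) x - x = -((u * s) x + x) := by rw [LinearMap.neg_apply]; abel
    rw [heq] at h
    rw [hbval]
    exact (neg_mem_iff).1 h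
  have combMP : ∀ (M : Submodule K E), (∀ x ∈ M, u x ∈ M) → ∀ x,
      u x + x ∈ M → s x - x ∈ M → b x ∈ M := by
    intro M hMu x h1 h2
    have hMu' : ∀ y ∈ M, (-u) y ∈ M := fun y hy => by
      rw [LinearMap.neg_apply]; exact neg_mem (hMu y hy)
    have h1' : (-u) x - x ∈ M := by
      have heq : (-u) x - x = -(u x + x) := by rw [LinearMap.neg_apply]; abel
      rw [heq]; exact neg_mem h1
    have h := stmt13.lemB hMu' h1' h2
    rw [neg_mul] at h
    have heq : (-(u * s)) x - x = -((u * s) x + x) := by rw [LinearMap.neg_apply]; abel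
    rw [heq] at h
    rw [hbval]
    exact (neg_mem_iff).1 h
  -- decompositions
  have decompP : ∀ (M : Submodule K E), (∀ x ∈ M, u x ∈ M) → ∀ x, a x ∈ M →
      ∃ y z, y + z = x ∧ (u y - y ∈ M) ∧ (s y - y = 0) ∧ (u z + z ∈ M) ∧ (s z + z = 0) := by
    intro M hMu x hx
    rw [haval] at hx
    exact stmt13.lemC hchar huu hss hMu hx
  have decompM : ∀ (M : Submodule K E), (∀ x ∈ M, u x ∈ M) → ∀ x, b x ∈ M →
      ∃ y z, y + z = x ∧ (u y - y ∈ M) ∧ (s y + y = 0) ∧ (u z + z ∈ M) ∧ (s z - z = 0) := by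
    intro M hMu x hx
    rw [hbval] at hx
    have hx' : (u * (-s)) x - x ∈ M := by
      rw [mul_neg]
      have heq : (-(u * s)) x - x = -((u * s) x + x) := by rw [LinearMap.neg_apply]; abel
      rw [heq]
      exact neg_mem hx
    obtain ⟨y, z, hyz, hy1, hy2, hz1, hz2⟩ := stmt13.lemC hchar huu hneg_s hMu hx'
    refine ⟨y, z, hyz, hy1, ?_, hz1, ?_⟩
    · have heq : (-s) y - y = -(s y + y) := by rw [LinearMap.neg_apply]; abel
      rw [heq, neg_eq_zero] at hy2; exact hy2
    · have heq : (-s) z + z = -(s z - z) := by rw [LinearMap.neg_apply]; abel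
      rw [heq, neg_eq_zero] at hz2; exact hz2
  -- kernel successor membership
  have hker_succ_a : ∀ (n : ℕ) (x : E),
      x ∈ LinearMap.ker (a ^ (n+1)) ↔ a x ∈ LinearMap.ker (a ^ n) := by
    intro n x
    rw [LinearMap.mem_ker, LinearMap.mem_ker, pow_succ, Module.End.mul_apply]
  have hker_succ_b : ∀ (n : ℕ) (x : E),
      x ∈ LinearMap.ker (b ^ (n+1)) ↔ b x ∈ LinearMap.ker (b ^ n) := by
    intro n x
    rw [LinearMap.mem_ker, LinearMap.mem_ker, pow_succ, Module.End.mul_apply]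
  -- first main induction : F_e(n) = ker a^n
  have key1 : ∀ n, Fsig V W 1 n = LinearMap.ker (a ^ n) := by
    intro n
    induction n with
    | zero =>
      simp only [Fsig, pow_zero, Module.End.one_eq_id, LinearMap.ker_id]
    | succ n ih =>
      have hMu := hKa_u n
      have hMs := hKa_s n
      have hunfold : Fsig V W 1 (n+1)
          = ⨆ i : Fin 2, (Fsig V W 1 n ⊔ V i) ⊓ (Fsig V W 1 n ⊔ W i) := by
        simp only [Fsig, Equiv.Perm.coe_one, id_eq]
      rw [hunfold, stmt13.iSup_fin2, ih, memV0 _ hMu, memW0 _ hMs, memV1 _ hMu, memW1 _ hMs]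
      apply le_antisymm
      · refine sup_le ?_ ?_
        · intro x hx
          obtain ⟨hx1, hx2⟩ := Submodule.mem_inf.1 hx
          rw [Submodule.mem_comap, happ_sub] at hx1
          rw [Submodule.mem_comap, happ_sub] at hx2
          exact (hker_succ_a n x).2 (combPP _ hMu x hx1 hx2)
        · intro x hx
          obtain ⟨hx1, hx2⟩ := Submodule.mem_inf.1 hx
          rw [Submodule.mem_comap, happ_add] at hx1
          rw [Submodule.mem_comap, happ_add] at hx2
          exact (hker_succ_a n x).2 (combMM _ hMu x hx1 hx2)
      · intro x hx
        obtain ⟨y, z, hyz, hy1, hy2, hz1, hz2⟩ :=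
          decompP _ hMu x ((hker_succ_a n x).1 hx)
        rw [← hyz]
        refine Submodule.add_mem_sup ?_ ?_
        · refine Submodule.mem_inf.2 ⟨?_, ?_⟩
          · rw [Submodule.mem_comap, happ_sub]; exact hy1
          · rw [Submodule.mem_comap, happ_sub, hy2]; exact zero_mem _
        · refine Submodule.mem_inf.2 ⟨?_, ?_⟩
          · rw [Submodule.mem_comap, happ_add]; exact hz1
          · rw [Submodule.mem_comap, happ_add, hz2]; exact zero_mem _
  -- second main induction : F_tau(n) = ker b^n
  have key2 : ∀ n, Fsig V W (Equiv.swap 0 1) n = LinearMap.ker (b ^ n) := by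
    intro n
    induction n with
    | zero =>
      simp only [Fsig, pow_zero, Module.End.one_eq_id, LinearMap.ker_id]
    | succ n ih =>
      have hMu := hKb_u n
      have hMs := hKb_s n
      have hunfold : Fsig V W (Equiv.swap 0 1) (n+1)
          = (Fsig V W (Equiv.swap 0 1) n ⊔ V 0) ⊓ (Fsig V W (Equiv.swap 0 1) n ⊔ W 1)
            ⊔ (Fsig V W (Equiv.swap 0 1) n ⊔ V 1) ⊓ (Fsig V W (Equiv.swap 0 1) n ⊔ W 0) := by
        have h0 : (Equiv.swap (0:Fin 2) 1) 0 = 1 := Equiv.swap_apply_left 0 1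
        have h1 : (Equiv.swap (0:Fin 2) 1) 1 = 0 := Equiv.swap_apply_right 0 1
        simp only [Fsig]
        rw [stmt13.iSup_fin2, h0, h1]
      rw [hunfold, ih, memV0 _ hMu, memW1 _ hMs, memV1 _ hMu, memW0 _ hMs]
      apply le_antisymm
      · refine sup_le ?_ ?_
        · intro x hx
          obtain ⟨hx1, hx2⟩ := Submodule.mem_inf.1 hx
          rw [Submodule.mem_comap, happ_sub] at hx1
          rw [Submodule.mem_comap, happ_add] at hx2
          exact (hker_succ_b n x).2 (combPM _ hMu x hx1 hx2)
        · intro x hx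
          obtain ⟨hx1, hx2⟩ := Submodule.mem_inf.1 hx
          rw [Submodule.mem_comap, happ_add] at hx1
          rw [Submodule.mem_comap, happ_sub] at hx2
          exact (hker_succ_b n x).2 (combMP _ hMu x hx1 hx2)
      · intro x hx
        obtain ⟨y, z, hyz, hy1, hy2, hz1, hz2⟩ :=
          decompM _ hMu x ((hker_succ_b n x).1 hx)
        rw [← hyz]
        refine Submodule.add_mem_sup ?_ ?_
        · refine Submodule.mem_inf.2 ⟨?_, ?_⟩
          · rw [Submodule.mem_comap, happ_sub]; exact hy1
          · rw [Submodule.mem_comap, happ_add, hy2]; exact zero_mem _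
        · refine Submodule.mem_inf.2 ⟨?_, ?_⟩
          · rw [Submodule.mem_comap, happ_add]; exact hz1
          · rw [Submodule.mem_comap, happ_sub, hz2]; exact zero_mem _
  -- the G-sequence recursion
  have hkerD : ∀ (n : ℕ) (x : E),
      a x ∈ LinearMap.ker (a ^ n) ⊔ LinearMap.ker (b ^ n) →
      x ∈ LinearMap.ker (a ^ (n+1)) ⊔ LinearMap.ker (b ^ (n+1)) := by
    intro n x hx
    rcases Submodule.mem_sup.1 hx with ⟨k1, hk1, k2, hk2, hsum⟩
    obtain ⟨z, hz1, hz2⟩ := stmt13.neumann hchar b n k2 (LinearMap.mem_ker.1 hk2)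
    have haz : a z = k2 := by
      have h' : a z = b z - (2:K) • z := by rw [← hba z]; abel
      rw [h', hz2]
    have h1 : x - z ∈ LinearMap.ker (a ^ (n+1)) := by
      rw [LinearMap.mem_ker, pow_succ, Module.End.mul_apply, map_sub, haz]
      have heq : a x - k2 = k1 := by rw [← hsum]; abel
      rw [heq]
      exact LinearMap.mem_ker.1 hk1
    have h2 : z ∈ LinearMap.ker (b ^ (n+1)) := by
      rw [LinearMap.mem_ker, pow_succ', Module.End.mul_apply, hz1, map_zero]
    have hxz : (x - z) + z = x := by abel
    rw [← hxz]
    exact Submodule.add_mem_sup h1 h2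
  have hkerD' : ∀ (n : ℕ) (x : E),
      b x ∈ LinearMap.ker (a ^ n) ⊔ LinearMap.ker (b ^ n) →
      x ∈ LinearMap.ker (a ^ (n+1)) ⊔ LinearMap.ker (b ^ (n+1)) := by
    intro n x hx
    rcases Submodule.mem_sup.1 hx with ⟨k1, hk1, k2, hk2, hsum⟩
    obtain ⟨y, hy1, hy2⟩ := stmt13.neumann' hchar a n k1 (LinearMap.mem_ker.1 hk1)
    have hby : b y = k1 := by
      have h' : b y = a y + (2:K) • y := by rw [← hba y]; abel
      rw [h', hy2]
    have h1 : y ∈ LinearMap.ker (a ^ (n+1)) := by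
      rw [LinearMap.mem_ker, pow_succ', Module.End.mul_apply, hy1, map_zero]
    have h2 : x - y ∈ LinearMap.ker (b ^ (n+1)) := by
      rw [LinearMap.mem_ker, pow_succ, Module.End.mul_apply, map_sub, hby]
      have heq : b x - k1 = k2 := by rw [← hsum]; abel
      rw [heq]
      exact LinearMap.mem_ker.1 hk2
    have hxz : y + (x - y) = x := by abel
    rw [← hxz]
    exact Submodule.add_mem_sup h1 h2
  have keyG : ∀ n : ℕ,
      (⨆ i : Fin 2, ⨆ j : Fin 2,
        ((LinearMap.ker (a ^ n) ⊔ LinearMap.ker (b ^ n)) ⊔ W i)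
          ⊓ ((LinearMap.ker (a ^ n) ⊔ LinearMap.ker (b ^ n)) ⊔ V j))
      = LinearMap.ker (a ^ (n+1)) ⊔ LinearMap.ker (b ^ (n+1)) := by
    intro n
    have hMu := hGu n
    have hMs := hGs n
    rw [stmt13.iSup2_fin2]
    apply le_antisymm
    · refine sup_le (sup_le ?_ ?_) (sup_le ?_ ?_)
      · rw [memW0 _ hMs, memV0 _ hMu]
        intro x hx
        obtain ⟨hx1, hx2⟩ := Submodule.mem_inf.1 hx
        rw [Submodule.mem_comap, happ_sub] at hx1
        rw [Submodule.mem_comap, happ_sub] at hx2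
        exact hkerD n x (combPP _ hMu x hx2 hx1)
      · rw [memW0 _ hMs, memV1 _ hMu]
        intro x hx
        obtain ⟨hx1, hx2⟩ := Submodule.mem_inf.1 hx
        rw [Submodule.mem_comap, happ_sub] at hx1
        rw [Submodule.mem_comap, happ_add] at hx2
        exact hkerD' n x (combMP _ hMu x hx2 hx1)
      · rw [memW1 _ hMs, memV0 _ hMu]
        intro x hx
        obtain ⟨hx1, hx2⟩ := Submodule.mem_inf.1 hx
        rw [Submodule.mem_comap, happ_add] at hx1
        rw [Submodule.mem_comap, happ_sub] at hx2
        exact hkerD' n x (combPM _ hMu x hx2 hx1)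
      · rw [memW1 _ hMs, memV1 _ hMu]
        intro x hx
        obtain ⟨hx1, hx2⟩ := Submodule.mem_inf.1 hx
        rw [Submodule.mem_comap, happ_add] at hx1
        rw [Submodule.mem_comap, happ_add] at hx2
        exact hkerD n x (combMM _ hMu x hx2 hx1)
    · have hXle00 : ((LinearMap.ker (a ^ n) ⊔ LinearMap.ker (b ^ n)) ⊔ W 0) ⊓ ((LinearMap.ker (a ^ n) ⊔ LinearMap.ker (b ^ n)) ⊔ V 0) ≤ ((((LinearMap.ker (a ^ n) ⊔ LinearMap.ker (b ^ n)) ⊔ W 0) ⊓ ((LinearMap.ker (a ^ n) ⊔ LinearMap.ker (b ^ n)) ⊔ V 0) ⊔ ((LinearMap.ker (a ^ n) ⊔ LinearMap.ker (b ^ n)) ⊔ W 0) ⊓ ((LinearMap.ker (a ^ n) ⊔ LinearMap.ker (b ^ n)) ⊔ V 1)) ⊔ (((LinearMap.ker (a ^ n) ⊔ LinearMap.ker (b ^ n)) ⊔ W 1) ⊓ ((LinearMap.ker (a ^ n) ⊔ LinearMap.ker (b ^ n)) ⊔ V 0) ⊔ ((LinearMap.ker (a ^ n) ⊔ LinearMap.ker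 (b ^ n)) ⊔ W 1) ⊓ ((LinearMap.ker (a ^ n) ⊔ LinearMap.ker (b ^ n)) ⊔ V 1))) := le_sup_left.trans le_sup_left
      have hXle01 : ((LinearMap.ker (a ^ n) ⊔ LinearMap.ker (b ^ n)) ⊔ W 0) ⊓ ((LinearMap.ker (a ^ n) ⊔ LinearMap.ker (b ^ n)) ⊔ V 1) ≤ ((((LinearMap.ker (a ^ n) ⊔ LinearMap.ker (b ^ n)) ⊔ W 0) ⊓ ((LinearMap.ker (a ^ n) ⊔ LinearMap.ker (b ^ n)) ⊔ V 0) ⊔ ((LinearMap.ker (a ^ n) ⊔ LinearMap.ker (b ^ n)) ⊔ W 0) ⊓ ((LinearMap.ker (a ^ n) ⊔ LinearMap.ker (b ^ n)) ⊔ V 1)) ⊔ (((LinearMap.ker (a ^ n) ⊔ LinearMap.ker (b ^ n)) ⊔ W 1) ⊓ ((LinearMap.ker (a ^ n) ⊔ LinearMap.ker (b ^ n)) ⊔ V 0) ⊔ ((LinearMap.ker (a ^ n) ⊔ LinearMap.ker (b ^ n)) ⊔ W 1) ⊓ ((LinearMap.ker (a ^ n) ⊔ LinearMap.ker (b ^ n))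 ⊔ V 1))) := le_sup_right.trans le_sup_left
      have hXle10 : ((LinearMap.ker (a ^ n) ⊔ LinearMap.ker (b ^ n)) ⊔ W 1) ⊓ ((LinearMap.ker (a ^ n) ⊔ LinearMap.ker (b ^ n)) ⊔ V 0) ≤ ((((LinearMap.ker (a ^ n) ⊔ LinearMap.ker (b ^ n)) ⊔ W 0) ⊓ ((LinearMap.ker (a ^ n) ⊔ LinearMap.ker (b ^ n)) ⊔ V 0) ⊔ ((LinearMap.ker (a ^ n) ⊔ LinearMap.ker (b ^ n)) ⊔ W 0) ⊓ ((LinearMap.ker (a ^ n) ⊔ LinearMap.ker (b ^ n)) ⊔ V 1)) ⊔ (((LinearMap.ker (a ^ n) ⊔ LinearMap.ker (b ^ n)) ⊔ W 1) ⊓ ((LinearMap.ker (a ^ n) ⊔ LinearMap.ker (b ^ n)) ⊔ V 0) ⊔ ((LinearMap.ker (a ^ n) ⊔ LinearMap.ker (b ^ n)) ⊔ W 1) ⊓ ((LinearMap.ker (a ^ n) ⊔ LinearMap.ker (b ^ n)) ⊔ V 1))) := le_sup_left.trans le_sup_right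
      have hXle11 : ((LinearMap.ker (a ^ n) ⊔ LinearMap.ker (b ^ n)) ⊔ W 1) ⊓ ((LinearMap.ker (a ^ n) ⊔ LinearMap.ker (b ^ n)) ⊔ V 1) ≤ ((((LinearMap.ker (a ^ n) ⊔ LinearMap.ker (b ^ n)) ⊔ W 0) ⊓ ((LinearMap.ker (a ^ n) ⊔ LinearMap.ker (b ^ n)) ⊔ V 0) ⊔ ((LinearMap.ker (a ^ n) ⊔ LinearMap.ker (b ^ n)) ⊔ W 0) ⊓ ((LinearMap.ker (a ^ n) ⊔ LinearMap.ker (b ^ n)) ⊔ V 1)) ⊔ (((LinearMap.ker (a ^ n) ⊔ LinearMap.ker (b ^ n)) ⊔ W 1) ⊓ ((LinearMap.ker (a ^ n) ⊔ LinearMap.ker (b ^ n)) ⊔ V 0) ⊔ ((LinearMap.ker (a ^ n) ⊔ LinearMap.ker (b ^ n)) ⊔ W 1) ⊓ ((LinearMap.ker (a ^ n) ⊔ LinearMap.ker (b ^ n)) ⊔ V 1))) := le_sup_right.trans le_sup_right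
      refine sup_le ?_ ?_
      · intro x hx
        have hax : a x ∈ LinearMap.ker (a ^ n) ⊔ LinearMap.ker (b ^ n) :=
          Submodule.mem_sup_left ((hker_succ_a n x).1 hx)
        obtain ⟨y, z, hyz, hy1, hy2, hz1, hz2⟩ := decompP _ hMu x hax
        rw [← hyz]
        refine add_mem (hXle00 ?_) (hXle11 ?_)
        · refine Submodule.mem_inf.2 ⟨?_, ?_⟩
          · rw [memW0 _ hMs, Submodule.mem_comap, happ_sub, hy2]; exact zero_mem _
          · rw [memV0 _ hMu, Submodule.mem_comap, happ_sub]; exact hy1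
        · refine Submodule.mem_inf.2 ⟨?_, ?_⟩
          · rw [memW1 _ hMs, Submodule.mem_comap, happ_add, hz2]; exact zero_mem _
          · rw [memV1 _ hMu, Submodule.mem_comap, happ_add]; exact hz1
      · intro x hx
        have hbx : b x ∈ LinearMap.ker (a ^ n) ⊔ LinearMap.ker (b ^ n) :=
          Submodule.mem_sup_right ((hker_succ_b n x).1 hx)
        obtain ⟨y, z, hyz, hy1, hy2, hz1, hz2⟩ := decompM _ hMu x hbx
        rw [← hyz]
        refine add_mem (hXle10 ?_) (hXle01 ?_)
        · refine Submodule.mem_inf.2 ⟨?_, ?_⟩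
          · rw [memW1 _ hMs, Submodule.mem_comap, happ_add, hy2]; exact zero_mem _
          · rw [memV0 _ hMu, Submodule.mem_comap, happ_sub]; exact hy1
        · refine Submodule.mem_inf.2 ⟨?_, ?_⟩
          · rw [memW0 _ hMs, Submodule.mem_comap, happ_sub, hz2]; exact zero_mem _
          · rw [memV1 _ hMu, Submodule.mem_comap, happ_add]; exact hz1
  -- third main induction : FTilde(n) = orthogonal of G n
  have key3 : ∀ n, FTilde V W n
      = B.orthogonal (LinearMap.ker (a ^ n) ⊔ LinearMap.ker (b ^ n)) := by
    intro n
    induction n with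
    | zero =>
      have hG0 : LinearMap.ker (a ^ 0) ⊔ LinearMap.ker (b ^ 0) = (⊥ : Submodule K E) := by
        simp [pow_zero, Module.End.one_eq_id, LinearMap.ker_id]
      rw [hG0, LinearMap.BilinForm.orthogonal_bot]
      rfl
    | succ n ih =>
      have hVW : ∀ i : Fin 2, B.orthogonal (W i) = V i := fun i => by
        rw [hWdef i, LinearMap.BilinForm.orthogonal_orthogonal hBnd hBrefl]
      have hstep : FTilde V W (n+1)
          = ⨅ i : Fin 2, ⨅ j : Fin 2, (FTilde V W n ⊓ V i) ⊔ (FTilde V W n ⊓ W j) := by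
        simp only [FTilde]
      have hcongr : ∀ i j : Fin 2,
          (FTilde V W n ⊓ V i) ⊔ (FTilde V W n ⊓ W j)
          = B.orthogonal
              (((LinearMap.ker (a ^ n) ⊔ LinearMap.ker (b ^ n)) ⊔ W i)
                ⊓ ((LinearMap.ker (a ^ n) ⊔ LinearMap.ker (b ^ n)) ⊔ V j)) := by
        intro i j
        rw [ih, ← hVW i, hWdef j, ← stmt13.orth_sup B _ (W i), ← stmt13.orth_sup B _ (V j),
          ← stmt13.orth_inf hBnd hBrefl]
      rw [hstep]
      rw [iInf_congr fun i => iInf_congr fun j => hcongr i j]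
      rw [← stmt13.orth_iSup2, keyG n]
  -- stabilization at N = finrank
  have key1' : Fe = LinearMap.ker (a ^ Module.finrank K E) := by
    rw [hFe]
    apply le_antisymm
    · refine iSup_le fun n => ?_
      rw [key1 n]
      exact Module.End.ker_pow_le_ker_pow_finrank a n
    · rw [← key1 (Module.finrank K E)]
      exact le_iSup _ (Module.finrank K E)
  have key2' : Ftau = LinearMap.ker (b ^ Module.finrank K E) := by
    rw [hFtau]
    apply le_antisymm
    · refine iSup_le fun n => ?_
      rw [key2 n]
      exact Module.End.ker_pow_le_ker_pow_finrank b n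
    · rw [← key2 (Module.finrank K E)]
      exact le_iSup _ (Module.finrank K E)
  have hGle : ∀ n, LinearMap.ker (a ^ n) ⊔ LinearMap.ker (b ^ n)
      ≤ LinearMap.ker (a ^ Module.finrank K E) ⊔ LinearMap.ker (b ^ Module.finrank K E) :=
    fun n => sup_le_sup (Module.End.ker_pow_le_ker_pow_finrank a n)
      (Module.End.ker_pow_le_ker_pow_finrank b n)
  have key3' : Ft = B.orthogonal
      (LinearMap.ker (a ^ Module.finrank K E) ⊔ LinearMap.ker (b ^ Module.finrank K E)) := by
    rw [hFt]
    apply le_antisymm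
    · rw [← key3 (Module.finrank K E)]
      exact iInf_le _ (Module.finrank K E)
    · refine le_iInf fun n => ?_
      rw [key3 n]
      exact LinearMap.BilinForm.orthogonal_le (hGle n)
  -- disjointness of the two kernels
  have hdisj1 : Disjoint (LinearMap.ker (a ^ Module.finrank K E))
      (LinearMap.ker (b ^ Module.finrank K E)) := by
    rw [Submodule.disjoint_def]
    intro x hx1 hx2
    exact stmt13.lemDisj hchar hab hba (Module.finrank K E + Module.finrank K E)
      (Module.finrank K E) (Module.finrank K E) le_rfl x
      (LinearMap.mem_ker.1 hx1) (LinearMap.mem_ker.1 hx2)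
  -- Fitting disjointness
  have hker2a : LinearMap.ker (a ^ (Module.finrank K E + Module.finrank K E))
      = LinearMap.ker (a ^ Module.finrank K E) :=
    Module.End.ker_pow_eq_ker_pow_finrank_of_le le_add_self
  have hker2b : LinearMap.ker (b ^ (Module.finrank K E + Module.finrank K E))
      = LinearMap.ker (b ^ Module.finrank K E) :=
    Module.End.ker_pow_eq_ker_pow_finrank_of_le le_add_self
  have hdisj_KeIe : Disjoint (LinearMap.ker (a ^ Module.finrank K E))
      (LinearMap.range (a ^ Module.finrank K E)) := by
    rw [Submodule.disjoint_def]
    intro x hx1 hx2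
    obtain ⟨p, hp⟩ := hx2
    have h0 : (a ^ (Module.finrank K E + Module.finrank K E)) p = 0 := by
      rw [pow_add, Module.End.mul_apply, hp]
      exact LinearMap.mem_ker.1 hx1
    have hp' : p ∈ LinearMap.ker (a ^ Module.finrank K E) := by
      rw [← hker2a]; exact LinearMap.mem_ker.2 h0
    rw [← hp]
    exact LinearMap.mem_ker.1 hp'
  have hdisj_KtIt : Disjoint (LinearMap.ker (b ^ Module.finrank K E))
      (LinearMap.range (b ^ Module.finrank K E)) := by
    rw [Submodule.disjoint_def]
    intro x hx1 hx2
    obtain ⟨p, hp⟩ := hx2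
    have h0 : (b ^ (Module.finrank K E + Module.finrank K E)) p = 0 := by
      rw [pow_add, Module.End.mul_apply, hp]
      exact LinearMap.mem_ker.1 hx1
    have hp' : p ∈ LinearMap.ker (b ^ Module.finrank K E) := by
      rw [← hker2b]; exact LinearMap.mem_ker.2 h0
    rw [← hp]
    exact LinearMap.mem_ker.1 hp'
  -- ker b^N is contained in range a^N
  have hKtIe : LinearMap.ker (b ^ Module.finrank K E)
      ≤ LinearMap.range (a ^ Module.finrank K E) := by
    have hiter : ∀ m : ℕ, ∀ k : E, (b ^ Module.finrank K E) k = 0 →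
        ∃ z, (b ^ Module.finrank K E) z = 0 ∧ (a ^ m) z = k := by
      intro m
      induction m with
      | zero => intro k hk; exact ⟨k, hk, by simp⟩
      | succ m ih =>
        intro k hk
        obtain ⟨w, hw1, hw2⟩ := ih k hk
        obtain ⟨z, hz1, hz2⟩ := stmt13.neumann hchar b (Module.finrank K E) w hw1
        have haz : a z = w := by
          have h' : a z = b z - (2:K) • z := by rw [← hba z]; abel
          rw [h', hz2]
        refine ⟨z, hz1, ?_⟩
        rw [pow_succ, Module.End.mul_apply, haz, hw2]
    intro x hx
    obtain ⟨z, _, hz2⟩ := hiter (Module.finrank K E) x (LinearMap.mem_ker.1 hx)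
    exact ⟨z, hz2⟩
  -- adjointness of powers
  have hBapow := stmt13.adj_pow B hBa
  have hBbpow := stmt13.adj_pow B hBb
  -- range a^N ⊓ range b^N is orthogonal to ker a^N ⊔ ker b^N
  have hIe_orth : LinearMap.range (a ^ Module.finrank K E)
        ⊓ LinearMap.range (b ^ Module.finrank K E)
      ≤ B.orthogonal (LinearMap.ker (a ^ Module.finrank K E)
        ⊔ LinearMap.ker (b ^ Module.finrank K E)) := by
    intro x hx
    obtain ⟨hxa, hxb⟩ := Submodule.mem_inf.1 hx
    obtain ⟨p, hp⟩ := hxa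
    obtain ⟨q, hq⟩ := hxb
    intro m hm
    rcases Submodule.mem_sup.1 hm with ⟨k1, hk1, k2, hk2, rfl⟩
    show B (k1 + k2) x = 0
    rw [map_add, LinearMap.add_apply]
    have e1 : B k1 x = 0 := by
      rw [← hp, ← hBapow (Module.finrank K E) k1 p, LinearMap.mem_ker.1 hk1, map_zero,
        LinearMap.zero_apply]
    have e2 : B k2 x = 0 := by
      rw [← hq, ← hBbpow (Module.finrank K E) k2 q, LinearMap.mem_ker.1 hk2, map_zero,
        LinearMap.zero_apply]
    rw [e1, e2, add_zero]
  -- Fitting codisjointness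
  have hKeIe_top : LinearMap.ker (a ^ Module.finrank K E)
      ⊔ LinearMap.range (a ^ Module.finrank K E) = ⊤ := by
    apply Submodule.eq_top_of_finrank_eq
    have h1 := Submodule.finrank_sup_add_finrank_inf_eq
      (LinearMap.ker (a ^ Module.finrank K E)) (LinearMap.range (a ^ Module.finrank K E))
    rw [hdisj_KeIe.eq_bot, finrank_bot, add_zero] at h1
    have h2 := LinearMap.finrank_range_add_finrank_ker (a ^ Module.finrank K E)
    have h3 : Module.finrank K ↥(LinearMap.ker (a ^ Module.finrank K E)
        ⊔ LinearMap.range (a ^ Module.finrank K E)) ≤ Module.finrank K E :=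
      Submodule.finrank_le _
    omega
  -- orthogonal of ker a^N is inside range a^N
  have horthKe : B.orthogonal (LinearMap.ker (a ^ Module.finrank K E))
      ≤ LinearMap.range (a ^ Module.finrank K E) := by
    intro y hy
    have hy' : y ∈ LinearMap.ker (a ^ Module.finrank K E)
        ⊔ LinearMap.range (a ^ Module.finrank K E) := by
      rw [hKeIe_top]; exact Submodule.mem_top
    rcases Submodule.mem_sup.1 hy' with ⟨k, hk, i, hi, hsum⟩
    have hkz : k = 0 := by
      apply hBnd.1
      intro z
      apply hBrefl
      have hz' : z ∈ LinearMap.ker (a ^ Module.finrank K E)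
          ⊔ LinearMap.range (a ^ Module.finrank K E) := by
        rw [hKeIe_top]; exact Submodule.mem_top
      rcases Submodule.mem_sup.1 hz' with ⟨zk, hzk, zi, hzi, hzsum⟩
      rw [← hzsum, map_add, LinearMap.add_apply]
      have e1 : B zk k = 0 := by
        have h1 : B zk y = 0 := hy zk hzk
        obtain ⟨p, hp⟩ := hi
        have h2 : B zk i = 0 := by
          rw [← hp, ← hBapow (Module.finrank K E) zk p, LinearMap.mem_ker.1 hzk, map_zero,
            LinearMap.zero_apply]
        have hky : k = y - i := by rw [← hsum]; abel
        rw [hky, map_sub, h1, h2, sub_zero]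
      have e2 : B zi k = 0 := by
        obtain ⟨w, hw⟩ := hzi
        rw [← hw, hBapow (Module.finrank K E) w k, LinearMap.mem_ker.1 hk, map_zero]
      rw [e1, e2, add_zero]
    rw [← hsum, hkz, zero_add]
    exact hi
  -- and symmetrically for b
  have hKtIt_top : LinearMap.ker (b ^ Module.finrank K E)
      ⊔ LinearMap.range (b ^ Module.finrank K E) = ⊤ := by
    apply Submodule.eq_top_of_finrank_eq
    have h1 := Submodule.finrank_sup_add_finrank_inf_eq
      (LinearMap.ker (b ^ Module.finrank K E)) (LinearMap.range (b ^ Module.finrank K E))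
    rw [hdisj_KtIt.eq_bot, finrank_bot, add_zero] at h1
    have h2 := LinearMap.finrank_range_add_finrank_ker (b ^ Module.finrank K E)
    have h3 : Module.finrank K ↥(LinearMap.ker (b ^ Module.finrank K E)
        ⊔ LinearMap.range (b ^ Module.finrank K E)) ≤ Module.finrank K E :=
      Submodule.finrank_le _
    omega
  have horthKt : B.orthogonal (LinearMap.ker (b ^ Module.finrank K E))
      ≤ LinearMap.range (b ^ Module.finrank K E) := by
    intro y hy
    have hy' : y ∈ LinearMap.ker (b ^ Module.finrank K E)
        ⊔ LinearMap.range (b ^ Module.finrank K E) := by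
      rw [hKtIt_top]; exact Submodule.mem_top
    rcases Submodule.mem_sup.1 hy' with ⟨k, hk, i, hi, hsum⟩
    have hkz : k = 0 := by
      apply hBnd.1
      intro z
      apply hBrefl
      have hz' : z ∈ LinearMap.ker (b ^ Module.finrank K E)
          ⊔ LinearMap.range (b ^ Module.finrank K E) := by
        rw [hKtIt_top]; exact Submodule.mem_top
      rcases Submodule.mem_sup.1 hz' with ⟨zk, hzk, zi, hzi, hzsum⟩
      rw [← hzsum, map_add, LinearMap.add_apply]
      have e1 : B zk k = 0 := by
        have h1 : B zk y = 0 := hy zk hzk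
        obtain ⟨p, hp⟩ := hi
        have h2 : B zk i = 0 := by
          rw [← hp, ← hBbpow (Module.finrank K E) zk p, LinearMap.mem_ker.1 hzk, map_zero,
            LinearMap.zero_apply]
        have hky : k = y - i := by rw [← hsum]; abel
        rw [hky, map_sub, h1, h2, sub_zero]
      have e2 : B zi k = 0 := by
        obtain ⟨w, hw⟩ := hzi
        rw [← hw, hBbpow (Module.finrank K E) w k, LinearMap.mem_ker.1 hk, map_zero]
      rw [e1, e2, add_zero]
    rw [← hsum, hkz, zero_add]
    exact hi
  -- Ft is inside range a^N ⊓ range b^N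
  have hFt_le : B.orthogonal (LinearMap.ker (a ^ Module.finrank K E)
        ⊔ LinearMap.ker (b ^ Module.finrank K E))
      ≤ LinearMap.range (a ^ Module.finrank K E)
        ⊓ LinearMap.range (b ^ Module.finrank K E) := by
    intro y hy
    exact Submodule.mem_inf.2
      ⟨horthKe (LinearMap.BilinForm.orthogonal_le le_sup_left hy),
       horthKt (LinearMap.BilinForm.orthogonal_le le_sup_right hy)⟩
  -- disjointness of the sum of kernels with the intersection of ranges
  have hdisjS : Disjoint
      (LinearMap.ker (a ^ Module.finrank K E) ⊔ LinearMap.ker (b ^ Module.finrank K E))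
      (LinearMap.range (a ^ Module.finrank K E) ⊓ LinearMap.range (b ^ Module.finrank K E)) := by
    rw [Submodule.disjoint_def]
    intro x hx1 hx2
    rcases Submodule.mem_sup.1 hx1 with ⟨k, hk, t, ht, hsum⟩
    have htIe : t ∈ LinearMap.range (a ^ Module.finrank K E) := hKtIe ht
    have hkIe : k ∈ LinearMap.range (a ^ Module.finrank K E) := by
      have hkk : k = x - t := by rw [← hsum]; abel
      rw [hkk]
      exact sub_mem (Submodule.mem_inf.1 hx2).1 htIe
    have hk0 : k = 0 := (Submodule.disjoint_def.1 hdisj_KeIe) k hk hkIe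
    have hxt : x = t := by rw [← hsum, hk0, zero_add]
    exact (Submodule.disjoint_def.1 hdisj_KtIt) x (hxt ▸ ht) (Submodule.mem_inf.1 hx2).2
  -- all of E is spanned
  have htop : (LinearMap.ker (a ^ Module.finrank K E) ⊔ LinearMap.ker (b ^ Module.finrank K E))
      ⊔ (LinearMap.range (a ^ Module.finrank K E)
          ⊓ LinearMap.range (b ^ Module.finrank K E)) = ⊤ := by
    apply Submodule.eq_top_of_finrank_eq
    have h1 := Submodule.finrank_sup_add_finrank_inf_eq
      (LinearMap.ker (a ^ Module.finrank K E)) (LinearMap.ker (b ^ Module.finrank K E))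
    rw [hdisj1.eq_bot, finrank_bot, add_zero] at h1
    have h2 := Submodule.finrank_sup_add_finrank_inf_eq
      (LinearMap.ker (a ^ Module.finrank K E) ⊔ LinearMap.ker (b ^ Module.finrank K E))
      (LinearMap.range (a ^ Module.finrank K E) ⊓ LinearMap.range (b ^ Module.finrank K E))
    rw [hdisjS.eq_bot, finrank_bot, add_zero] at h2
    have h3 := Submodule.finrank_sup_add_finrank_inf_eq
      (LinearMap.range (a ^ Module.finrank K E)) (LinearMap.range (b ^ Module.finrank K E))
    have h4 := LinearMap.finrank_range_add_finrank_ker (a ^ Module.finrank K E)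
    have h5 := LinearMap.finrank_range_add_finrank_ker (b ^ Module.finrank K E)
    have h6 : Module.finrank K
        ↥((LinearMap.ker (a ^ Module.finrank K E) ⊔ LinearMap.ker (b ^ Module.finrank K E))
          ⊔ (LinearMap.range (a ^ Module.finrank K E)
            ⊓ LinearMap.range (b ^ Module.finrank K E))) ≤ Module.finrank K E :=
      Submodule.finrank_le _
    have h7 : Module.finrank K
        ↥(LinearMap.range (a ^ Module.finrank K E)
          ⊔ LinearMap.range (b ^ Module.finrank K E)) ≤ Module.finrank K E :=
      Submodule.finrank_le _
    omega
  -- conclusions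
  refine ⟨⟨?_, ?_, ?_⟩, ?_, ?_, ?_⟩
  · rw [key1', key2']; exact hdisj1
  · rw [key1', key2', key3']
    exact Disjoint.mono_right hFt_le hdisjS
  · rw [key1', key2', key3']
    rw [eq_top_iff, ← htop]
    exact sup_le_sup_left hIe_orth _
  · intro x hx y hy
    rw [key1'] at hx
    rw [key2'] at hy
    exact stmt13.lemOrth hchar B hba hBa (Module.finrank K E + Module.finrank K E)
      (Module.finrank K E) (Module.finrank K E) le_rfl x y
      (LinearMap.mem_ker.1 hx) (LinearMap.mem_ker.1 hy)
  · intro x hx y hy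
    rw [key1'] at hx
    rw [key3'] at hy
    exact hy x (Submodule.mem_sup_left hx)
  · intro x hx y hy
    rw [key2'] at hx
    rw [key3'] at hy
    exact hy x (Submodule.mem_sup_right hx)
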